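/- Let L be a finite-dimensional abelian Lie algebra over a field with basis {x₁, x₂, …, xₙ}, and let h: L × L → L⊗L be a universal Lie pairing. Then L⊗L is the internal direct sum of the submodule L□L and the submodule spanned by {xᵢ⊗xⱼ : 1 ≤ i < j ≤ n}. -/

import Mathlib

universe u v w x y

/-- A Lie pairing `ρ : L × L → H` of Lie algebras over a field `F`:
a bilinear map satisfying the three Lie-pairing relations. -/
structure IsLiePairing (F : Type u) [Field F] {L : Type v} {H : Type w}
    [LieRing L] [LieAlgebra F L] [LieRing H] [LieAlgebra F H]
    (ρ : L → L → H) : Prop where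
  add_left : ∀ l l' k : L, ρ (l + l') k = ρ l k + ρ l' k
  add_right : ∀ l k k' : L, ρ l (k + k') = ρ l k + ρ l k'
  smul_left : ∀ (c : F) (l k : L), ρ (c • l) k = c • ρ l k
  smul_right : ∀ (c : F) (l k : L), ρ l (c • k) = c • ρ l k
  bracket_left : ∀ l l' s : L, ρ ⁅l, l'⁆ s = ρ l ⁅l', s⁆ - ρ l' ⁅l, s⁆
  bracket_right : ∀ l s s' : L, ρ l ⁅s, s'⁆ = ρ ⁅s', l⁆ s - ρ ⁅s, l⁆ s'
  bracket_bracket : ∀ l s l' s' : L, ρ ⁅l, s⁆ ⁅l', s'⁆ = -⁅ρ s l, ρ l' s'⁆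

/-- `h : L × L → T` is a universal Lie pairing: `T` plays the role of the
nonabelian tensor square `L ⊗ L`, with `h l l' = l ⊗ l'`. -/
structure IsUniversalLiePairing (F : Type u) [Field F] (L : Type v) (T : Type w)
    [LieRing L] [LieAlgebra F L] [LieRing T] [LieAlgebra F T]
    (h : L → L → T) : Prop where
  isLiePairing : IsLiePairing F h
  universal : ∀ (Q : Type (max u v w)) [LieRing Q] [LieAlgebra F Q]
      (h' : L → L → Q), IsLiePairing F h' →
        ∃! ζ : T →ₗ⁅F⁆ Q, ∀ x y : L, ζ (h x y) = h' x y

/-! ### Auxiliary constructions -/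

/-- Abelian Lie algebra wrapper on a module. -/
def AbLie (M : Type x) : Type x := M

instance (M : Type x) [AddCommGroup M] : AddCommGroup (AbLie M) :=
  inferInstanceAs (AddCommGroup M)

instance (M : Type x) [AddCommGroup M] : LieRing (AbLie M) where
  bracket _ _ := 0
  add_lie := by intros; show (0:M) = 0 + 0; simp
  lie_add := by intros; show (0:M) = 0 + 0; simp
  lie_self := by intros; rfl
  leibniz_lie := by intros; show (0:M) = 0 + 0; simp

instance (F : Type u) [Field F] (M : Type x) [AddCommGroup M] [Module F M] :
    Module F (AbLie M) := inferInstanceAs (Module F M)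

instance (F : Type u) [Field F] (M : Type x) [AddCommGroup M] [Module F M] :
    LieAlgebra F (AbLie M) where
  lie_smul := by intros t x m; show (0:M) = t • (0:M); simp

instance uliftLieRing (R : Type x) [LieRing R] : LieRing (ULift.{y} R) where
  bracket x y := ⟨⁅x.down, y.down⁆⟩
  add_lie := by intros; apply ULift.ext; exact add_lie ..
  lie_add := by intros; apply ULift.ext; exact lie_add ..
  lie_self := by intros; apply ULift.ext; exact lie_self _
  leibniz_lie := by intros; apply ULift.ext; exact leibniz_lie ..

instance uliftLieAlgebra (F : Type u) [Field F] (R : Type x) [LieRing R] [LieAlgebra F R] :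
    LieAlgebra F (ULift.{y} R) where
  lie_smul := by
    intros t x m; apply ULift.ext
    show ⁅x.down, (t • m).down⁆ = (t • ⟨⁅x.down, m.down⁆⟩ : ULift.{y} R).down
    simp [lie_smul]

/-- `ULift.up` as a Lie algebra morphism. -/
def upLieHom (F : Type u) [Field F] (R : Type x) [LieRing R] [LieAlgebra F R] :
    R →ₗ⁅F⁆ ULift.{y} R where
  toFun := ULift.up
  map_add' := by intros; rfl
  map_smul' := by intros; rfl
  map_lie' := by intros; rfl

/-- A bilinear map into an abelian Lie algebra, from an abelian Lie algebra,
is a Lie pairing. -/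
lemma abLiePairing (F : Type u) [Field F] {L : Type v} [LieRing L] [LieAlgebra F L]
    (hab : IsLieAbelian L) {M : Type x} [AddCommGroup M] [Module F M]
    (B : L →ₗ[F] L →ₗ[F] M) :
    IsLiePairing F (fun l l' => (show AbLie M from B l l')) := by
  haveI := hab
  constructor
  · intro l l' k; show B (l + l') k = (B l k : M) + B l' k; simp
  · intro l k k'; show B l (k + k') = (B l k : M) + B l k'; simp
  · intro c l k; show B (c • l) k = c • (B l k : M); simp
  · intro c l k; show B l (c • k) = c • (B l k : M); simp
  · intro l l' s
    show B ⁅l, l'⁆ s = (B l ⁅l', s⁆ : M) - B l' ⁅l, s⁆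
    simp [trivial_lie_zero]
  · intro l s s'
    show B l ⁅s, s'⁆ = (B ⁅s', l⁆ s : M) - B ⁅s, l⁆ s'
    simp [trivial_lie_zero]
  · intro l s l' s'
    show B ⁅l, s⁆ ⁅l', s'⁆ = -(0 : M)
    simp [trivial_lie_zero]

/-- Composing a Lie pairing with a Lie algebra morphism gives a Lie pairing. -/
lemma IsLiePairing.comp {F : Type u} [Field F] {L : Type v} {H : Type w} {H' : Type x}
    [LieRing L] [LieAlgebra F L] [LieRing H] [LieAlgebra F H]
    [LieRing H'] [LieAlgebra F H']
    {ρ : L → L → H} (hp : IsLiePairing F ρ) (f : H →ₗ⁅F⁆ H') :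
    IsLiePairing F (fun l l' => f (ρ l l')) := by
  constructor
  · intro l l' k; rw [hp.add_left]; simp
  · intro l k k'; rw [hp.add_right]; simp
  · intro c l k; rw [hp.smul_left]; simp
  · intro c l k; rw [hp.smul_right]; simp
  · intro l l' s; rw [hp.bracket_left]; simp
  · intro l s s'; rw [hp.bracket_right]; simp
  · intro l s l' s'; rw [hp.bracket_bracket]; simp

/-- If `L` is a finite-dimensional abelian Lie algebra with basis
`x₁, …, xₙ`, then the tensor square `L⊗L` is the internal direct sum of the
submodule `L□L` (spanned by the `l⊗l`) and the submodule spanned by the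
`xᵢ⊗xⱼ` with `i < j`. -/
theorem tensorSquare_abelian_direct_sum (F : Type u) [Field F]
    (L : Type v) (T : Type w) [LieRing L] [LieAlgebra F L]
    [LieRing T] [LieAlgebra F T]
    (h : L → L → T) (hh : IsUniversalLiePairing F L T h)
    (hab : IsLieAbelian L) (n : ℕ) (b : Module.Basis (Fin n) F L) :
    Submodule.span F {z : T | ∃ l : L, z = h l l} ⊓
        Submodule.span F {z : T | ∃ i j : Fin n, i < j ∧ z = h (b i) (b j)} = ⊥ ∧
      Submodule.span F {z : T | ∃ l : L, z = h l l} ⊔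
        Submodule.span F {z : T | ∃ i j : Fin n, i < j ∧ z = h (b i) (b j)} = ⊤ := by
  haveI := hab
  obtain ⟨hp, huniv⟩ := hh
  -- basic consequences of the pairing axioms
  have h0l : ∀ k : L, h 0 k = 0 := by
    intro k
    have := hp.smul_left 0 0 k
    simpa using this
  have h0r : ∀ k : L, h k 0 = 0 := by
    intro k
    have := hp.smul_right 0 k 0
    simpa using this
  have hbr0 : ∀ a c a' c' : L, ⁅h a c, h a' c'⁆ = (0 : T) := by
    intro a c a' c'
    have := hp.bracket_bracket c a a' c'
    rw [trivial_lie_zero, trivial_lie_zero, h0l] at this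
    exact neg_eq_zero.mp this.symm
  -- the pairing as a bilinear map
  set B : L →ₗ[F] L →ₗ[F] T :=
    LinearMap.mk₂ F h hp.add_left hp.smul_left hp.add_right hp.smul_right with hBdef
  have hB : ∀ l l' : L, B l l' = h l l' := fun _ _ => rfl
  set S1 : Set T := {z : T | ∃ l : L, z = h l l} with hS1
  set S2 : Set T := {z : T | ∃ i j : Fin n, i < j ∧ z = h (b i) (b j)} with hS2
  set P : Submodule F T := Submodule.span F S1 ⊔ Submodule.span F S2 with hPdef
  constructor
  · -- intersection is trivial
    set B1 : L →ₗ[F] L →ₗ[F] (ULift.{max v w} ({p : Fin n × Fin n // p.1 < p.2} → F)) :=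
      LinearMap.mk₂ F
        (fun l l' => ULift.up fun q => b.repr l q.1.1 * b.repr l' q.1.2
            - b.repr l q.1.2 * b.repr l' q.1.1)
        (by intro m m' k; apply ULift.ext; funext q; simp [map_add]; ring)
        (by intro c m k; apply ULift.ext; funext q; simp [map_smul]; ring)
        (by intro m k k'; apply ULift.ext; funext q; simp [map_add]; ring)
        (by intro c m k; apply ULift.ext; funext q; simp [map_smul]; ring)
      with hB1
    have hp1 := abLiePairing F hab B1
    obtain ⟨ζ₁, hζ₁, -⟩ :=
      huniv (AbLie (ULift.{max v w} ({p : Fin n × Fin n // p.1 < p.2} → F))) _ hp1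
    set ev : AbLie (ULift.{max v w} ({p : Fin n × Fin n // p.1 < p.2} → F))
        →ₗ[F] ({p : Fin n × Fin n // p.1 < p.2} → F) :=
      { toFun := fun x => ULift.down (show ULift.{max v w} _ from x)
        map_add' := fun _ _ => rfl
        map_smul' := fun _ _ => rfl } with hev
    set g : T →ₗ[F] ({p : Fin n × Fin n // p.1 < p.2} → F) := ev.comp ζ₁.toLinearMap with hg
    have hgval : ∀ l l' : L, g (h l l') = fun q => b.repr l q.1.1 * b.repr l' q.1.2
        - b.repr l q.1.2 * b.repr l' q.1.1 := by
      intro l l'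
      show ev (ζ₁ (h l l')) = _
      rw [hζ₁]
      rfl
    have gspan1 : Submodule.span F S1 ≤ LinearMap.ker g := by
      rw [Submodule.span_le]
      rintro z ⟨l, rfl⟩
      rw [SetLike.mem_coe, LinearMap.mem_ker, hgval]
      funext q
      show _ - _ = (0 : F)
      ring
    set v : {p : Fin n × Fin n // p.1 < p.2} → T := fun p => h (b p.1.1) (b p.1.2) with hv
    have hS2eq : S2 = Set.range v := by
      ext z
      constructor
      · rintro ⟨i, j, hij, rfl⟩; exact ⟨⟨(i, j), hij⟩, rfl⟩
      · rintro ⟨⟨⟨i, j⟩, hij⟩, rfl⟩; exact ⟨i, j, hij, rfl⟩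
    have gv : ∀ p : {p : Fin n × Fin n // p.1 < p.2},
        g (v p) = fun q => if q.1 = p.1 then (1 : F) else 0 := by
      rintro ⟨⟨i, j⟩, hij⟩
      rw [show v ⟨(i, j), hij⟩ = h (b i) (b j) from rfl, hgval]
      funext q
      obtain ⟨⟨q1, q2⟩, hq⟩ := q
      simp only [Module.Basis.repr_self, Finsupp.single_apply, Prod.mk.injEq]
      have hsec : (if i = q2 then (1 : F) else 0) * (if j = q1 then 1 else 0) = 0 := by
        by_cases h3 : i = q2
        · by_cases h4 : j = q1
          · exfalso
            rw [h3, h4] at hij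
            exact lt_asymm hq hij
          · rw [if_neg h4, mul_zero]
        · rw [if_neg h3, zero_mul]
      rw [hsec, sub_zero]
      by_cases h1 : i = q1
      · by_cases h2 : j = q2
        · rw [if_pos h1, if_pos h2, if_pos ⟨h1.symm, h2.symm⟩, one_mul]
        · rw [if_neg h2, mul_zero, if_neg]
          rintro ⟨-, hcon⟩
          exact h2 hcon.symm
      · rw [if_neg h1, zero_mul, if_neg]
        rintro ⟨hcon, -⟩
        exact h1 hcon.symm
    rw [eq_bot_iff]
    rintro z ⟨hz1, hz2⟩
    have hgz : g z = 0 := gspan1 hz1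
    rw [SetLike.mem_coe] at hz2
    rw [hS2eq] at hz2
    obtain ⟨c, hc⟩ := (Submodule.mem_span_range_iff_exists_fun F).mp hz2
    have hcz : ∀ q, c q = 0 := by
      intro q
      have e : g z = ∑ p, c p • g (v p) := by
        rw [← hc, map_sum]
        simp only [map_smul]
      rw [hgz] at e
      have e2 := congrFun e.symm q
      rw [Finset.sum_apply] at e2
      simp only [Pi.smul_apply, gv, smul_eq_mul, Pi.zero_apply] at e2
      rw [Finset.sum_eq_single q] at e2
      · simpa using e2
      · intro p _ hpq
        rw [if_neg, mul_zero]
        intro hqp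
        exact hpq (Subtype.ext hqp.symm)
      · intro hq
        exact absurd (Finset.mem_univ q) hq
    rw [Submodule.mem_bot, ← hc]
    exact Finset.sum_eq_zero fun p _ => by rw [hcz p, zero_smul]
  · -- the sum is everything
    -- every basic pairing value lies in P
    have hbasisP : ∀ i j : Fin n, h (b i) (b j) ∈ P := by
      intro i j
      rcases lt_trichotomy i j with hij | hij | hij
      · exact Submodule.mem_sup_right (Submodule.subset_span ⟨i, j, hij, rfl⟩)
      · subst hij
        exact Submodule.mem_sup_left (Submodule.subset_span ⟨b i, rfl⟩)
      · -- j < i : use polarization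
        have hexp : h (b i + b j) (b i + b j)
            = h (b i) (b i) + h (b i) (b j) + (h (b j) (b i) + h (b j) (b j)) := by
          rw [hp.add_left, hp.add_right, hp.add_right]
        have : h (b i) (b j) = h (b i + b j) (b i + b j)
            - h (b i) (b i) - h (b j) (b j) - h (b j) (b i) := by
          rw [hexp]; abel
        rw [this]
        have m1 : h (b i + b j) (b i + b j) ∈ P :=
          Submodule.mem_sup_left (Submodule.subset_span ⟨b i + b j, rfl⟩)
        have m2 : h (b i) (b i) ∈ P :=
          Submodule.mem_sup_left (Submodule.subset_span ⟨b i, rfl⟩)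
        have m3 : h (b j) (b j) ∈ P :=
          Submodule.mem_sup_left (Submodule.subset_span ⟨b j, rfl⟩)
        have m4 : h (b j) (b i) ∈ P :=
          Submodule.mem_sup_right (Submodule.subset_span ⟨j, i, hij, rfl⟩)
        exact sub_mem (sub_mem (sub_mem m1 m2) m3) m4
    -- every pairing value lies in P
    have key1 : ∀ (i : Fin n) (y : L), B (b i) y ∈ P := by
      intro i y
      have hexp : B (b i) y = ∑ j, b.repr y j • B (b i) (b j) := by
        conv_lhs => rw [← b.sum_repr y]
        rw [map_sum]
        simp only [map_smul]
      rw [hexp]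
      exact Submodule.sum_mem _ fun j _ => Submodule.smul_mem _ _ (hbasisP i j)
    have key2 : ∀ x y : L, h x y ∈ P := by
      intro x y
      have hexp : h x y = ∑ i, b.repr x i • B (b i) y := by
        rw [← hB]
        conv_lhs => rw [← b.sum_repr x]
        rw [map_sum, LinearMap.sum_apply]
        simp only [map_smul, LinearMap.smul_apply]
      rw [hexp]
      exact Submodule.sum_mem _ fun i _ => Submodule.smul_mem _ _ (key1 i y)
    -- the span of all pairing values
    set Mspan : Submodule F T := Submodule.span F {z : T | ∃ a c : L, z = h a c} with hMdef
    have hPM : P = Mspan := by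
      apply le_antisymm
      · refine sup_le (Submodule.span_mono ?_) (Submodule.span_mono ?_)
        · rintro z ⟨l, rfl⟩; exact ⟨l, l, rfl⟩
        · rintro z ⟨i, j, _, rfl⟩; exact ⟨b i, b j, rfl⟩
      · rw [Submodule.span_le]
        rintro z ⟨a, c, rfl⟩
        exact key2 a c
    -- brackets vanish on Mspan
    have brM : ∀ x ∈ Mspan, ∀ y ∈ Mspan, ⁅x, y⁆ = (0 : T) := by
      intro x hx
      refine Submodule.span_induction ?_ ?_ ?_ ?_ hx
      · rintro z ⟨a, c, rfl⟩ y hy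
        refine Submodule.span_induction ?_ ?_ ?_ ?_ hy
        · rintro w ⟨a', c', rfl⟩; exact hbr0 a c a' c'
        · simp
        · intro u v _ _ hu hv; rw [lie_add, hu, hv, add_zero]
        · intro t u _ hu; rw [lie_smul, hu, smul_zero]
      · intro y _; simp
      · intro u v _ _ hu hv y hy; rw [add_lie, hu y hy, hv y hy, add_zero]
      · intro t u _ hu y hy; rw [smul_lie, hu y hy, smul_zero]
    -- Mspan as a Lie subalgebra
    have Kbr : ∀ {x y : T}, x ∈ Mspan → y ∈ Mspan → ⁅x, y⁆ ∈ Mspan := by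
      intro x y hx hy
      rw [brM x hx y hy]
      exact Mspan.zero_mem
    set K : LieSubalgebra F T := { toSubmodule := Mspan, lie_mem' := Kbr } with hKdef
    have hKmem : ∀ l l' : L, h l l' ∈ K := fun l l' =>
      Submodule.subset_span ⟨l, l', rfl⟩
    -- the pairing into ULift K
    set h2 : L → L → ULift.{max u v} K := fun l l' => ULift.up ⟨h l l', hKmem l l'⟩ with hh2
    have hp2 : IsLiePairing F h2 := by
      constructor
      · intro l l' k; apply ULift.ext; apply Subtype.ext; exact hp.add_left l l' k
      · intro l k k'; apply ULift.ext; apply Subtype.ext; exact hp.add_right l k k'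
      · intro c l k; apply ULift.ext; apply Subtype.ext; exact hp.smul_left c l k
      · intro c l k; apply ULift.ext; apply Subtype.ext; exact hp.smul_right c l k
      · intro l l' s; apply ULift.ext; apply Subtype.ext
        show h ⁅l, l'⁆ s = h l ⁅l', s⁆ - h l' ⁅l, s⁆
        exact hp.bracket_left l l' s
      · intro l s s'; apply ULift.ext; apply Subtype.ext
        show h l ⁅s, s'⁆ = h ⁅s', l⁆ s - h ⁅s, l⁆ s'
        exact hp.bracket_right l s s'
      · intro l s l' s'; apply ULift.ext; apply Subtype.ext
        show h ⁅l, s⁆ ⁅l', s'⁆ = -⁅h s l, h l' s'⁆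
        exact hp.bracket_bracket l s l' s'
    obtain ⟨ζ₂, hζ₂, -⟩ := huniv (ULift.{max u v} K) h2 hp2
    -- inclusion ULift K → T as a Lie hom
    set j : ULift.{max u v} K →ₗ⁅F⁆ T :=
      { toFun := fun x => (x.down : T)
        map_add' := fun _ _ => rfl
        map_smul' := fun _ _ => rfl
        map_lie' := fun {_ _} => rfl } with hjdef
    -- two maps T → ULift T agreeing on the image of h
    have hp3 : IsLiePairing F (fun l l' => (upLieHom F T : T →ₗ⁅F⁆ ULift.{max u v} T) (h l l')) :=
      hp.comp _
    obtain ⟨ζ₃, hζ₃, huniq3⟩ := huniv (ULift.{max u v} T) _ hp3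
    set c1 : T →ₗ⁅F⁆ ULift.{max u v} T := upLieHom F T with hc1
    set c2 : T →ₗ⁅F⁆ ULift.{max u v} T := ((upLieHom F T).comp j).comp ζ₂ with hc2
    have e1 : c1 = ζ₃ := huniq3 c1 (fun x y => rfl)
    have e2 : c2 = ζ₃ := huniq3 c2 (fun x y => by
      show (upLieHom F T) (j (ζ₂ (h x y))) = _
      rw [hζ₂ x y]
      rfl)
    have hall : ∀ t : T, t ∈ Mspan := by
      intro t
      have : c2 t = c1 t := by rw [e1, e2]
      have ht : ((ζ₂ t).down : T) = t := congrArg ULift.down this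
      rw [← ht]
      exact (ζ₂ t).down.2
    rw [hPdef] at *
    rw [eq_top_iff]
    intro t _
    rw [hPM]
    exact hall t
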